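/- Let A ⊆ ω^ω × ω^ω be analytic, represented by a tree T with (x,y) ∈ A iff T_{xy} ∉ WF, and define the rank δ(x) to be the least α with A_x = (A_α)_x (and ∞ if none exists), where A_α = {(x,y) : T_{xy} ∉ WF_α}. Then for any Borel set B ⊆ ω^ω, the set A ∩ (B × ω^ω) is Borel if and only if there exists α < ω₁ such that δ(x) < α for all x ∈ B. -/

import Mathlib

open MeasureTheory

/-- The "extension" relation of a tree `T ⊆ ω^{<ω}`: `s` is a proper extension
of `t` and `s ∈ T`.  `T` is well-founded (has no infinite branch) iff this
relation is well-founded. -/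
def branchRel (T : Set (List ℕ)) : List ℕ → List ℕ → Prop :=
  fun s t => t <+: s ∧ s ≠ t ∧ s ∈ T

/-- `T` is a well-founded tree (`T ∈ WF`). -/
def TreeWF (T : Set (List ℕ)) : Prop := WellFounded (branchRel T)

/-- The ordinal rank of a well-founded tree, computed at the empty sequence. -/
noncomputable def treeRank (T : Set (List ℕ)) (h : TreeWF T) : Ordinal :=
  (h.apply []).rank

/-- `T ∈ WF_α`: `T` is well-founded of rank at most `α`. -/
def TreeRankLE (T : Set (List ℕ)) (α : Ordinal) : Prop :=
  ∃ h : TreeWF T, treeRank T h ≤ α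

/-- The section tree `T_{xy} = {s : (x↾|s|, y↾|s|, s) ∈ T}` of a tree `T` on
`ω × ω × ω`. -/
def secTree (T : Set (List (ℕ × ℕ × ℕ))) (x y : ℕ → ℕ) : Set (List ℕ) :=
  {s | (List.ofFn fun i : Fin s.length => (x i.1, y i.1, s.get i)) ∈ T}

/-- The `α`-th approximation `A_α = {(x,y) : T_{xy} ∉ WF_α}` to the analytic set
represented by `T`. -/
def Aapprox (T : Set (List (ℕ × ℕ × ℕ))) (α : Ordinal) : Set ((ℕ → ℕ) × (ℕ → ℕ)) :=
  {p | ¬ TreeRankLE (secTree T p.1 p.2) α}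


theorem treeWF_of_acc_nil {U : Set (List ℕ)} (h : Acc (branchRel U) []) : TreeWF U := by
  constructor
  intro t
  constructor
  intro s hs
  rcases hs with ⟨hpre, hne, hmem⟩
  have hs0 : s ≠ [] := by
    rintro rfl
    exact hne (List.prefix_nil.mp hpre).symm
  exact h.inv ⟨List.nil_prefix, hs0, hmem⟩

theorem treeRankLE_iff {U : Set (List ℕ)} {o : Ordinal} :
    TreeRankLE U o ↔ ∃ h : Acc (branchRel U) [], h.rank ≤ o := by
  constructor
  · rintro ⟨h, hle⟩
    exact ⟨h.apply [], hle⟩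
  · rintro ⟨h, hle⟩
    exact ⟨treeWF_of_acc_nil h, hle⟩

theorem secTree_congr {T : Set (List (ℕ × ℕ × ℕ))} {x y x' y' : ℕ → ℕ} {s : List ℕ}
    (h : ∀ i < s.length, x i = x' i ∧ y i = y' i) :
    s ∈ secTree T x y ↔ s ∈ secTree T x' y' := by
  have : (List.ofFn fun i : Fin s.length => (x i.1, y i.1, s.get i))
      = (List.ofFn fun i : Fin s.length => (x' i.1, y' i.1, s.get i)) := by
    congr 1
    funext i
    rw [(h i.1 i.2).1, (h i.1 i.2).2]
  simp only [secTree, Set.mem_setOf_eq, this]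

/-- rank ≤ o at a node iff all predecessors have rank < o -/
theorem acc_rank_le_iff {α : Type} {r : α → α → Prop} {a : α} {o : Ordinal} :
    (∃ h : Acc r a, h.rank ≤ o) ↔ ∀ b, r b a → ∃ h : Acc r b, h.rank < o := by
  constructor
  · rintro ⟨h, hle⟩ b hb
    exact ⟨h.inv hb, (Acc.rank_lt_of_rel h hb).trans_le hle⟩
  · intro H
    have hA : Acc r a := Acc.intro a fun b hb => (H b hb).choose
    refine ⟨hA, ?_⟩
    rw [Acc.rank_eq]
    apply Ordinal.iSup_le
    rintro ⟨b, hb⟩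
    obtain ⟨h, hlt⟩ := H b hb
    have : (hA.inv hb).rank = h.rank := rfl
    rw [this, Order.succ_le_iff]
    exact hlt

def nodeLE (T : Set (List (ℕ × ℕ × ℕ))) (s : List ℕ) (o : Ordinal) :
    Set ((ℕ → ℕ) × (ℕ → ℕ)) :=
  {p | ∃ h : Acc (branchRel (secTree T p.1 p.2)) s, h.rank ≤ o}

theorem measurable_secTree_mem (T : Set (List (ℕ × ℕ × ℕ))) (s : List ℕ) :
    MeasurableSet {p : (ℕ → ℕ) × (ℕ → ℕ) | s ∈ secTree T p.1 p.2} := by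
  classical
  set n := s.length with hn
  set G : ((ℕ → ℕ) × (ℕ → ℕ)) → (Fin n → ℕ × ℕ) := fun p i => (p.1 i, p.2 i) with hG
  have hGm : Measurable G := by
    apply measurable_pi_lambda
    intro i
    exact ((measurable_pi_apply (i : ℕ)).comp measurable_fst).prodMk
      ((measurable_pi_apply (i : ℕ)).comp measurable_snd)
  have : {p : (ℕ → ℕ) × (ℕ → ℕ) | s ∈ secTree T p.1 p.2}
      = G ⁻¹' {g | (List.ofFn fun i : Fin n => ((g i).1, (g i).2, s.get i)) ∈ T} := rfl
  rw [this]
  exact hGm ((Set.to_countable _).measurableSet)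

theorem nodeLE_eq (T : Set (List (ℕ × ℕ × ℕ))) (s : List ℕ) (o : Ordinal) :
    nodeLE T s o = ⋂ s' : List ℕ,
      ({p : (ℕ → ℕ) × (ℕ → ℕ) | s' ∈ secTree T p.1 p.2} ∩ {p | s <+: s' ∧ s' ≠ s})ᶜ
        ∪ ⋃ β ∈ Set.Iio o, nodeLE T s' β := by
  ext p
  constructor
  · intro H
    have H' := acc_rank_le_iff.mp H
    refine Set.mem_iInter.mpr fun s' => ?_
    by_cases hb : branchRel (secTree T p.1 p.2) s' s
    · obtain ⟨h, hlt⟩ := H' s' hb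
      exact Or.inr (Set.mem_biUnion hlt ⟨h, le_rfl⟩)
    · exact Or.inl fun hmem => hb ⟨hmem.2.1, hmem.2.2, hmem.1⟩
  · intro H
    refine acc_rank_le_iff.mpr fun s' hb => ?_
    rcases Set.mem_iInter.mp H s' with h | h
    · exact absurd ⟨hb.2.2, hb.1, hb.2.1⟩ h
    · obtain ⟨β, hβ, h', hle⟩ := by simpa using h
      exact ⟨h', hle.trans_lt hβ⟩

theorem Iio_countable_of_lt_omega1 {o : Ordinal} (ho : o < (Cardinal.aleph 1).ord) :
    (Set.Iio o).Countable := by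
  have hcard : o.card < Cardinal.aleph 1 := Cardinal.lt_ord.mp ho
  have h0 : o.card ≤ Cardinal.aleph0 := by
    rwa [← Cardinal.succ_aleph0, Order.lt_succ_iff] at hcard
  have h1 : Countable o.ToType := by
    rw [← Cardinal.mk_le_aleph0_iff, Cardinal.mk_toType]
    exact h0
  have h2 : Countable (Set.Iio o) := Countable.of_equiv _ (Ordinal.ToType.mk (o := o)).symm.toEquiv
  exact Set.countable_coe_iff.mp h2

theorem nodeLE_measurable (T : Set (List (ℕ × ℕ × ℕ))) :
    ∀ o : Ordinal, o < (Cardinal.aleph 1).ord → ∀ s, MeasurableSet (nodeLE T s o) := by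
  intro o
  induction o using Ordinal.induction with
  | h o IH =>
    intro ho s
    rw [nodeLE_eq]
    apply MeasurableSet.iInter
    intro s'
    apply MeasurableSet.union
    · refine ((measurable_secTree_mem T s').inter ?_).compl
      by_cases h : s <+: s' ∧ s' ≠ s
      · have : {p : (ℕ → ℕ) × (ℕ → ℕ) | s <+: s' ∧ s' ≠ s} = Set.univ := by ext q; simp [h]
        rw [this]; exact MeasurableSet.univ
      · have : {p : (ℕ → ℕ) × (ℕ → ℕ) | s <+: s' ∧ s' ≠ s} = ∅ := by ext q; simpa using h
        rw [this]; exact MeasurableSet.empty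
    · exact MeasurableSet.biUnion (Iio_countable_of_lt_omega1 ho)
        fun β hβ => IH β hβ (lt_trans hβ ho) s'

theorem no_descending {α : Sort*} {r : α → α → Prop} (hwf : WellFounded r) (g : ℕ → α)
    (H : ∀ n, r (g (n+1)) (g n)) : False := by
  have key : ∀ a, Acc r a → ∀ n, g n = a → False := by
    intro a h
    induction h with
    | intro a _ IH => exact fun n hn => IH (g (n+1)) (hn ▸ H n) (n+1) rfl
  exact key (g 0) (hwf.apply _) 0 rfl

theorem acc_rank_lt_omega1 {α : Type} [Countable α] {r : α → α → Prop} {a : α}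
    (h : Acc r a) : h.rank < (Cardinal.aleph 1).ord := by
  induction h with
  | intro a ha IH =>
    rw [Acc.rank_eq]
    rw [Cardinal.ord_aleph]
    apply Ordinal.iSup_lt_omega_one
    rintro ⟨b, hb⟩
    rw [← Cardinal.ord_aleph]
    have hlim : Order.IsSuccLimit ((Cardinal.aleph 1).ord) := Cardinal.isSuccLimit_ord (Cardinal.aleph0_le_aleph 1)
    exact hlim.succ_lt (by simpa using IH b hb)

theorem rank_le_of_map {α β : Type} {r : α → α → Prop} {r' : β → β → Prop} (φ : α → β)
    (hm : ∀ a b, r a b → r' (φ a) (φ b)) {b : β} (hb : Acc r' b) :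
    ∀ a, φ a = b → ∃ h : Acc r a, h.rank ≤ hb.rank := by
  induction hb with
  | intro b hbacc IH =>
    intro a ha
    have hacc : ∀ a', r a' a → ∃ h : Acc r a', h.rank < (Acc.intro b hbacc).rank := by
      intro a' ha'
      have h1 : r' (φ a') b := ha ▸ hm a' a ha'
      obtain ⟨h, hle⟩ := IH (φ a') h1 a' rfl
      exact ⟨h, hle.trans_lt (Acc.rank_lt_of_rel (Acc.intro b hbacc) h1)⟩
    have hA : Acc r a := Acc.intro a fun a' ha' => (hacc a' ha').choose
    refine ⟨hA, ?_⟩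
    rw [Acc.rank_eq]
    apply Ordinal.iSup_le
    rintro ⟨a', ha'⟩
    obtain ⟨h, hlt⟩ := hacc a' ha'
    have hrank : (hA.inv ha').rank = h.rank := rfl
    rw [hrank, Order.succ_le_iff]
    exact hlt



def extFn (u : List ℕ) (w : ℕ → ℕ) : Prop := ∀ i < u.length, w i = u.getD i 0

def masterRel (T : Set (List (ℕ × ℕ × ℕ))) (f : (ℕ → ℕ) → (ℕ → ℕ) × (ℕ → ℕ)) :
    (List ℕ × List ℕ) → (List ℕ × List ℕ) → Prop :=
  fun q' q => q.1 <+: q'.1 ∧ q.1 ≠ q'.1 ∧ q.2 <+: q'.2 ∧ q.2 ≠ q'.2 ∧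
    ∀ w : ℕ → ℕ, extFn q'.1 w → q'.2 ∈ secTree T (f w).1 (f w).2

theorem masterRel_wf (T : Set (List (ℕ × ℕ × ℕ))) (f : (ℕ → ℕ) → (ℕ → ℕ) × (ℕ → ℕ))
    (hWF : ∀ w, TreeWF (secTree T (f w).1 (f w).2)) : WellFounded (masterRel T f) := by
  have hlt : ∀ {a b : List ℕ × List ℕ}, masterRel T f a b → b.1.length < a.1.length :=
    fun {a b} h => lt_of_le_of_ne h.1.length_le (fun he => h.2.1 (h.1.eq_of_length he))
  haveI : IsStrictOrder (List ℕ × List ℕ) (masterRel T f) := {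
    irrefl := fun q h => h.2.1 rfl
    trans := by
      intro a b c hab hbc
      obtain ⟨h1, h2, h3, h4, h5⟩ := hab
      obtain ⟨g1, g2, g3, g4, g5⟩ := hbc
      refine ⟨g1.trans h1, ?_, g3.trans h3, ?_, h5⟩
      · have l1 : b.1.length < a.1.length := hlt ⟨h1, h2, h3, h4, h5⟩
        have l2 : c.1.length < b.1.length := hlt ⟨g1, g2, g3, g4, g5⟩
        intro he; rw [he] at l2; omega
      · have l1 : b.2.length < a.2.length :=
          lt_of_le_of_ne h3.length_le (fun hl => h4 (h3.eq_of_length hl))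
        have l2 : c.2.length < b.2.length :=
          lt_of_le_of_ne g3.length_le (fun hl => g4 (g3.eq_of_length hl))
        intro he; rw [he] at l2; omega }
  rw [RelEmbedding.wellFounded_iff_isEmpty]
  constructor
  intro e
  set g : ℕ → List ℕ × List ℕ := fun n => e n with hg
  have H : ∀ n, masterRel T f (g (n+1)) (g n) := fun n => e.map_rel_iff.2 (Nat.lt_succ_self n)
  set u : ℕ → List ℕ := fun n => (g n).1 with hu
  set s : ℕ → List ℕ := fun n => (g n).2 with hs
  have hulen : ∀ n, n ≤ (u n).length := by
    intro n
    induction n with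
    | zero => exact Nat.zero_le _
    | succ n ih =>
      have h1 : (u n).length < (u (n+1)).length := hlt (H n)
      omega
  have hchain : ∀ m n, m ≤ n → u m <+: u n := by
    intro m n h
    induction n, h using Nat.le_induction with
    | base => exact List.prefix_refl _
    | succ n hmn ih => exact ih.trans (H n).1
  set z : ℕ → ℕ := fun i => (u (i+1)).getD i 0 with hz
  have hext : ∀ n, extFn (u n) z := by
    intro n i hi
    have hi1 : i < (u (i+1)).length := lt_of_lt_of_le (Nat.lt_succ_self i) (hulen (i+1))
    simp only [hz]
    rcases le_total n (i+1) with h | h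
    · have hp := hchain n (i+1) h
      rw [List.getD_eq_getElem _ _ hi1, List.getD_eq_getElem _ _ hi]
      exact (hp.getElem hi).symm
    · have hp := hchain (i+1) n h
      rw [List.getD_eq_getElem _ _ hi1, List.getD_eq_getElem _ _ hi]
      exact hp.getElem hi1
  have hmem : ∀ n, s (n+1) ∈ secTree T (f z).1 (f z).2 := fun n => (H n).2.2.2.2 z (hext (n+1))
  have hdesc : ∀ n, branchRel (secTree T (f z).1 (f z).2) (s (n+2)) (s (n+1)) := by
    intro n
    exact ⟨(H (n+1)).2.2.1, Ne.symm (H (n+1)).2.2.2.1, hmem (n+1)⟩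
  exact no_descending (hWF z) (fun n => s (n+1)) hdesc

theorem rank_bound_of_witness (T : Set (List (ℕ × ℕ × ℕ))) (f : (ℕ → ℕ) → (ℕ → ℕ) × (ℕ → ℕ))
    (hf : Continuous f) (hWF : ∀ w, TreeWF (secTree T (f w).1 (f w).2)) (z : ℕ → ℕ) :
    TreeRankLE (secTree T (f z).1 (f z).2)
      (⨆ q : List ℕ × List ℕ, ((masterRel_wf T f hWF).apply q).rank) := by
  set x := (f z).1 with hx
  set y := (f z).2 with hy
  have hmod : ∀ n : ℕ, ∃ m : ℕ, ∀ w : ℕ → ℕ, (∀ i < m, w i = z i) →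
      ∀ i < n, (f w).1 i = x i ∧ (f w).2 i = y i := by
    intro n
    set W : Set (ℕ → ℕ) := {w | ∀ i < n, (f w).1 i = x i ∧ (f w).2 i = y i} with hW
    have hWopen : IsOpen W := by
      have : W = ⋂ i ∈ Set.Iio n,
          ((fun w => (f w).1 i) ⁻¹' {x i} ∩ (fun w => (f w).2 i) ⁻¹' {y i}) := by
        ext w
        simp [hW, Set.mem_iInter]
      rw [this]
      apply Set.Finite.isOpen_biInter (Set.finite_Iio n)
      intro i _
      exact IsOpen.inter
        (((continuous_apply i).comp (continuous_fst.comp hf)).isOpen_preimage _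
          (isOpen_discrete _))
        (((continuous_apply i).comp (continuous_snd.comp hf)).isOpen_preimage _
          (isOpen_discrete _))
    have hzW : z ∈ W := fun i _ => ⟨rfl, rfl⟩
    obtain ⟨v, ⟨x0, m, rfl⟩, hzv, hsub⟩ :=
      (PiNat.isTopologicalBasis_cylinders (fun _ : ℕ => ℕ)).exists_subset_of_mem_open hzW hWopen
    refine ⟨m, fun w hw => hsub ?_⟩
    intro i hi
    exact (hw i hi).trans (hzv i hi)
  choose M0 hM0 using hmod
  set M : ℕ → ℕ := fun n => Nat.rec (M0 0) (fun k ih => max (ih + 1) (M0 (k+1))) n with hM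
  have hM0le : ∀ n, M0 n ≤ M n := by
    intro n
    cases n with
    | zero => exact le_rfl
    | succ k => exact le_max_right _ _
  have hMstrict : StrictMono M := strictMono_nat_of_lt_succ fun n =>
    lt_of_lt_of_le (Nat.lt_succ_self _) (le_max_left _ _)
  set φ : List ℕ → List ℕ × List ℕ := fun s => ((List.range (M s.length)).map z, s) with hφ
  have hmono : ∀ a b, branchRel (secTree T x y) a b → masterRel T f (φ a) (φ b) := by
    intro a b hab
    obtain ⟨hpre, hne, hmem⟩ := hab
    have hlen : b.length < a.length :=
      lt_of_le_of_ne hpre.length_le (fun he => hne (hpre.eq_of_length he).symm)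
    have hMlt : M b.length < M a.length := hMstrict hlen
    refine ⟨?_, ?_, hpre, Ne.symm hne, ?_⟩
    · have h1 : List.range (M b.length) = (List.range (M a.length)).take (M b.length) := by
        rw [List.take_range, Nat.min_eq_left hMlt.le]
      show (List.range (M b.length)).map z <+: (List.range (M a.length)).map z
      rw [h1]
      exact ⟨(List.drop (M b.length) (List.range (M a.length))).map z, by
        rw [← List.map_append, List.take_append_drop]⟩
    · intro he
      have := congrArg List.length he
      simp only [hφ, List.length_map, List.length_range] at this
      omega
    · intro w hw
      have hcyl : ∀ i < M a.length, w i = z i := by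
        intro i hi
        have hlen2 : i < ((List.range (M a.length)).map z).length := by
          simpa using hi
        have := hw i (by simpa [hφ] using hi)
        rw [this, List.getD_eq_getElem _ _ hlen2, List.getElem_map, List.getElem_range]
      have hagree := hM0 a.length w (fun i hi => hcyl i (lt_of_lt_of_le hi (hM0le a.length)))
      exact (secTree_congr fun i hi =>
        ⟨((hagree i hi).1).symm, ((hagree i hi).2).symm⟩).mp hmem
  obtain ⟨h, hle⟩ := rank_le_of_map φ hmono ((masterRel_wf T f hWF).apply (φ [])) [] rfl
  exact treeRankLE_iff.mpr ⟨h, hle.trans (Ordinal.le_iSup _ (φ []))⟩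


/-- with `A` analytic represented by the tree `T` and the rank
`δ(x)` = the least `α` with `A_x = (A_α)_x` (so `δ(x) < α` iff `A_x = (A_β)_x`
for some `β < α`), for a Borel `B ⊆ ω^ω` the set `A ∩ (B × ω^ω)` is Borel iff
there is `α < ω₁` with `δ(x) < α` for all `x ∈ B`. -/
theorem rectangular_borel_iff_rank_bounded
    (A : Set ((ℕ → ℕ) × (ℕ → ℕ))) (T : Set (List (ℕ × ℕ × ℕ)))
    (hA : AnalyticSet A)
    (hrep : ∀ p : (ℕ → ℕ) × (ℕ → ℕ), p ∈ A ↔ ¬ TreeWF (secTree T p.1 p.2))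
    (B : Set (ℕ → ℕ)) (hB : MeasurableSet B) :
    MeasurableSet (A ∩ B ×ˢ (Set.univ : Set (ℕ → ℕ))) ↔
      ∃ α < (Cardinal.aleph 1).ord, ∀ x ∈ B, ∃ β < α,
        {y | (x, y) ∈ A} = {y | (x, y) ∈ Aapprox T β} := by
  constructor
  · intro hm
    set C : Set ((ℕ → ℕ) × (ℕ → ℕ)) := (B ×ˢ Set.univ) \ (A ∩ B ×ˢ Set.univ) with hC
    have hCm : MeasurableSet C := (hB.prod MeasurableSet.univ).diff hm
    have hCA : ∀ p ∈ C, p.1 ∈ B ∧ p ∉ A := by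
      rintro p ⟨hp1, hp2⟩
      exact ⟨hp1.1, fun hpA => hp2 ⟨hpA, hp1⟩⟩
    haveI : PolishSpace ((ℕ → ℕ) × (ℕ → ℕ)) := inferInstance
    have hCan : AnalyticSet C := hCm.analyticSet
    rw [AnalyticSet] at hCan
    rcases hCan with hemp | ⟨f, hf, hrange⟩
    · refine ⟨1, ?_, ?_⟩
      · have h1 : (1 : Ordinal) < Cardinal.aleph0.ord := by
          rw [Cardinal.ord_aleph0]
          exact Ordinal.one_lt_omega0
        exact h1.trans_le (Cardinal.ord_le_ord.mpr (Cardinal.aleph0_le_aleph 1))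
      · intro x hx
        refine ⟨0, zero_lt_one, ?_⟩
        ext y
        simp only [Set.mem_setOf_eq]
        have hxyA : (x, y) ∈ A := by
          by_contra hA'
          have hmemC : (x, y) ∈ C := ⟨⟨hx, trivial⟩, fun h => hA' h.1⟩
          rw [hemp] at hmemC
          exact hmemC
        constructor
        · intro _ hrle
          obtain ⟨hwf, _⟩ := hrle
          exact (hrep (x, y)).mp hxyA hwf
        · intro _
          exact hxyA
    · have hWF : ∀ w, TreeWF (secTree T (f w).1 (f w).2) := by
        intro w
        have hwC : f w ∈ C := hrange ▸ Set.mem_range_self w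
        by_contra hnwf
        exact (hCA _ hwC).2 ((hrep (f w)).mpr hnwf)
      set σ : Ordinal := ⨆ q : List ℕ × List ℕ, ((masterRel_wf T f hWF).apply q).rank with hσdef
      have hσ : σ < (Cardinal.aleph 1).ord :=
        by rw [Cardinal.ord_aleph]; exact Ordinal.iSup_lt_omega_one (fun _ => by rw [← Cardinal.ord_aleph]; exact acc_rank_lt_omega1 _)
      have hlim := Cardinal.isSuccLimit_ord (Cardinal.aleph0_le_aleph 1)
      have hσ1 : σ + 1 < (Cardinal.aleph 1).ord := by
        rw [Ordinal.add_one_eq_succ]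
        exact hlim.succ_lt hσ
      refine ⟨σ + 1, hσ1, ?_⟩
      intro x hx
      refine ⟨σ, by rw [Ordinal.add_one_eq_succ]; exact Order.lt_succ σ, ?_⟩
      ext y
      simp only [Set.mem_setOf_eq]
      constructor
      · intro hxyA hrle
        obtain ⟨hwf, _⟩ := hrle
        exact (hrep (x, y)).mp hxyA hwf
      · intro hApp
        by_contra hA'
        have hxyC : (x, y) ∈ C := ⟨⟨hx, trivial⟩, fun h => hA' h.1⟩
        rw [← hrange] at hxyC
        obtain ⟨z, hz⟩ := hxyC
        have hb := rank_bound_of_witness T f hf hWF z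
        rw [hz] at hb
        exact hApp hb
  · rintro ⟨α, hα, hsec⟩
    have hkey : A ∩ B ×ˢ Set.univ = (B ×ˢ Set.univ) ∩ (nodeLE T [] α)ᶜ := by
      ext p
      simp only [Set.mem_inter_iff, Set.mem_compl_iff]
      constructor
      · rintro ⟨hpA, hpB⟩
        refine ⟨hpB, fun hnode => ?_⟩
        obtain ⟨hwf, _⟩ := treeRankLE_iff.mpr hnode
        exact (hrep p).mp hpA hwf
      · rintro ⟨hpB, hnode⟩
        obtain ⟨β, hβα, heq⟩ := hsec p.1 hpB.1
        have hp2 : p.2 ∈ {y | (p.1, y) ∈ Aapprox T β} := by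
          simp only [Set.mem_setOf_eq, Aapprox]
          intro hrle
          obtain ⟨hwf, hle⟩ := hrle
          exact hnode (treeRankLE_iff.mp ⟨hwf, hle.trans hβα.le⟩)
        rw [← heq] at hp2
        exact ⟨hp2, hpB⟩
    rw [hkey]
    exact ((hB.prod MeasurableSet.univ).inter (nodeLE_measurable T α hα []).compl)
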